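/- Let f ∈ P be a nonzero homogeneous element of degree 3 and let I = Ann(f). Then Apolar(f) satisfies the small tangent space condition if and only if the graded module I/I² has Hilbert function given by: dim_k (I/I²)_2 = C(n+1,2) − n, dim_k (I/I²)_3 = C(n+2,3) − 1, dim_k (I/I²)_4 = n, and (I/I²)_j = 0 for all j ∉ {2,3,4}. (This is the statement that the tangent space Hom_S(I, S/I) to the Hilbert scheme at I has Hilbert function n, C(n+2,3)−1, C(n+1,2)−n in degrees −1, 0, 1 and 0 elsewhere, expressed through the graded dual.) -/

import Mathlib

open MvPolynomial

variable {k : Type*} [Field k] {σ : Type*}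

noncomputable def contract (s f : MvPolynomial σ k) : MvPolynomial σ k :=
  Finsupp.sum (AddMonoidAlgebra.coeff s) fun b cb => cb • f.divMonomial b

lemma contract_monomial (b : σ →₀ ℕ) (c : k) (f : MvPolynomial σ k) :
    contract (monomial b c) f = c • f.divMonomial b := by
  unfold contract
  rw [← single_eq_monomial, AddMonoidAlgebra.coeff_single]
  exact Finsupp.sum_single_index (by simp)

lemma contract_add_left (s t f : MvPolynomial σ k) :
    contract (s + t) f = contract s f + contract t f := by
  unfold contract
  rw [AddMonoidAlgebra.coeff_add]
  exact Finsupp.sum_add_index' (fun b => by simp) (fun b c c' => add_smul _ _ _)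

lemma contract_zero_left (f : MvPolynomial σ k) : contract 0 f = 0 := by
  unfold contract
  rw [AddMonoidAlgebra.coeff_zero]
  exact Finsupp.sum_zero_index

lemma contract_zero_right (s : MvPolynomial σ k) : contract s (0 : MvPolynomial σ k) = 0 := by
  unfold contract
  simp

lemma smul_divMonomial (c : k) (f : MvPolynomial σ k) (b : σ →₀ ℕ) :
    (c • f).divMonomial b = c • f.divMonomial b := by
  ext a
  simp [coeff_divMonomial, MvPolynomial.coeff_smul]

lemma contract_add_right (s f g : MvPolynomial σ k) :
    contract s (f + g) = contract s f + contract s g := by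
  unfold contract
  rw [← Finsupp.sum_add]
  exact Finsupp.sum_congr fun b _ => by rw [add_divMonomial, smul_add]

lemma contract_mul (s t f : MvPolynomial σ k) :
    contract (s * t) f = contract s (contract t f) := by
  induction s using MvPolynomial.induction_on' with
  | add p q hp hq => rw [add_mul, contract_add_left, contract_add_left, hp, hq]
  | monomial a c =>
    induction t using MvPolynomial.induction_on' with
    | add p q hp hq =>
      rw [mul_add, contract_add_left, contract_add_left p q, contract_add_right, hp, hq]
    | monomial b d =>
      rw [monomial_mul, contract_monomial, contract_monomial, contract_monomial,
        smul_divMonomial, mul_smul, ← divMonomial_add, add_comm a b]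

/-- The apolar (annihilator) ideal of `f` under contraction. -/
noncomputable def annIdeal (f : MvPolynomial σ k) : Ideal (MvPolynomial σ k) where
  carrier := {s | contract s f = 0}
  zero_mem' := contract_zero_left f
  add_mem' := fun hs ht => by
    simp only [Set.mem_setOf_eq] at *
    rw [contract_add_left, hs, ht, add_zero]
  smul_mem' := fun c x hx => by
    simp only [Set.mem_setOf_eq] at *
    rw [smul_eq_mul, contract_mul, hx, contract_zero_right]

/-- The dimension of the degree-`i` graded piece of `S/I`. -/
noncomputable def hilbQ (I : Ideal (MvPolynomial σ k)) (i : ℕ) : ℕ :=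
  Module.finrank k
    (↥(homogeneousSubmodule σ k i) ⧸
      ((I.restrictScalars k).comap (homogeneousSubmodule σ k i).subtype))

/-- `Apolar f` has Hilbert function `(1,n,n,1)` and `S/(Ann f)²` has the smallest
possible Hilbert function in degrees 4 and 5. -/
noncomputable def SmallTangentSpace (n : ℕ) (f : MvPolynomial σ k) : Prop :=
  hilbQ (annIdeal f) 0 = 1 ∧ hilbQ (annIdeal f) 1 = n ∧ hilbQ (annIdeal f) 2 = n ∧
    hilbQ (annIdeal f) 3 = 1 ∧ (∀ i : ℕ, 3 < i → hilbQ (annIdeal f) i = 0) ∧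
    hilbQ ((annIdeal f) ^ 2) 4 = n ∧ hilbQ ((annIdeal f) ^ 2) 5 = 0

/-- The dimension of the degree-`j` graded piece of the conormal module `I/I²`. -/
noncomputable def hilbConormal (I : Ideal (MvPolynomial σ k)) (j : ℕ) : ℕ :=
  Module.finrank k
    (↥(I.restrictScalars k ⊓ homogeneousSubmodule σ k j) ⧸
      (((I ^ 2).restrictScalars k).comap
        (I.restrictScalars k ⊓ homogeneousSubmodule σ k j).subtype))

section AuxLemmas

variable {k : Type*} [Field k] {σ : Type*}

lemma Finsupp.degree_add' (a b : σ →₀ ℕ) : (a + b).degree = a.degree + b.degree := by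
  simp [Finsupp.degree_eq_weight_one, map_add]

lemma Finsupp.degree_single' (i : σ) (m : ℕ) : (Finsupp.single i m).degree = m := by
  classical
  rcases eq_or_ne m 0 with rfl | hm
  · simp [map_zero]
  · exact Finsupp.degree_single i m

lemma Finsupp.degree_le_degree' {a b : σ →₀ ℕ} (h : a ≤ b) : a.degree ≤ b.degree := by
  have hb : a + (b - a) = b := add_tsub_cancel_of_le h
  calc a.degree ≤ a.degree + (b - a).degree := Nat.le_add_right _ _
  _ = b.degree := by rw [← Finsupp.degree_add', hb]

lemma exists_le_degree_eq {a : σ →₀ ℕ} {d : ℕ} (h : d ≤ a.degree) :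
    ∃ b, b ≤ a ∧ b.degree = d := by
  induction d with
  | zero => exact ⟨0, zero_le, map_zero _⟩
  | succ d ih =>
    obtain ⟨b, hba, hbd⟩ := ih (by omega)
    have hex : ∃ i, b i < a i := by
      by_contra hc
      push_neg at hc
      have hab : a ≤ b := Finsupp.le_def.mpr hc
      have := Finsupp.degree_le_degree' hab
      omega
    obtain ⟨i, hi⟩ := hex
    refine ⟨b + Finsupp.single i 1, ?_, by
      rw [Finsupp.degree_add', hbd, Finsupp.degree_single']⟩
    rw [Finsupp.le_def]
    intro j
    rcases eq_or_ne j i with rfl | hj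
    · simpa [Finsupp.single_eq_same] using hi
    · simp only [Finsupp.add_apply, Finsupp.single_eq_of_ne' (Ne.symm hj), add_zero]
      exact Finsupp.le_def.mp hba j

lemma contract_C (c : k) (f : MvPolynomial σ k) : contract (C c) f = c • f := by
  rw [C_apply, contract_monomial, MvPolynomial.divMonomial_zero]

lemma contract_smul_left (c : k) (s f : MvPolynomial σ k) :
    contract (c • s) f = c • contract s f := by
  rw [MvPolynomial.smul_eq_C_mul, contract_mul, contract_C]

/-- `contract · f` as a `k`-linear map. -/
noncomputable def contractL (f : MvPolynomial σ k) :
    MvPolynomial σ k →ₗ[k] MvPolynomial σ k where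
  toFun s := contract s f
  map_add' s t := contract_add_left s t f
  map_smul' c s := by simpa using contract_smul_left c s f

lemma mem_annIdeal_iff {s f : MvPolynomial σ k} :
    s ∈ annIdeal f ↔ contract s f = 0 := Iff.rfl

lemma divMonomial_mem_homogeneousSubmodule {f : MvPolynomial σ k} {m : ℕ}
    (hf : f ∈ homogeneousSubmodule σ k m) (b : σ →₀ ℕ) :
    f.divMonomial b ∈ homogeneousSubmodule σ k (m - b.degree) := by
  rw [mem_homogeneousSubmodule] at hf ⊢
  intro d hd
  rw [MvPolynomial.coeff_divMonomial] at hd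
  have h1 : (b + d).degree = m := by
    rw [Finsupp.degree_eq_weight_one]; exact hf hd
  rw [show (Finsupp.weight 1 : (σ →₀ ℕ) →+ ℕ) = Finsupp.weight (fun _ => 1) from rfl,
    ← Finsupp.degree_eq_weight_one]
  rw [Finsupp.degree_add'] at h1
  omega

lemma contract_mem_homogeneousSubmodule {s f : MvPolynomial σ k} {i m : ℕ}
    (hs : s ∈ homogeneousSubmodule σ k i) (hf : f ∈ homogeneousSubmodule σ k m) :
    contract s f ∈ homogeneousSubmodule σ k (m - i) := by
  unfold contract Finsupp.sum
  apply Submodule.sum_mem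
  intro b hb
  have hbd : b.degree = i := by
    rw [Finsupp.degree_eq_weight_one]
    exact hs (MvPolynomial.mem_support_iff.mp hb)
  have hmem := divMonomial_mem_homogeneousSubmodule hf b
  rw [hbd] at hmem
  exact Submodule.smul_mem _ _ hmem

lemma contract_eq_zero_of_gt {s f : MvPolynomial σ k} {i m : ℕ}
    (hs : s ∈ homogeneousSubmodule σ k i) (hf : f ∈ homogeneousSubmodule σ k m)
    (h : m < i) : contract s f = 0 := by
  unfold contract Finsupp.sum
  apply Finset.sum_eq_zero
  intro b hb
  have hbd : b.degree = i := by
    rw [Finsupp.degree_eq_weight_one]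
    exact hs (MvPolynomial.mem_support_iff.mp hb)
  have hzero : f.divMonomial b = 0 := by
    ext d
    rw [MvPolynomial.coeff_divMonomial, MvPolynomial.coeff_zero]
    refine MvPolynomial.IsHomogeneous.coeff_eq_zero hf ?_
    rw [Finsupp.degree_add']
    omega
  simp only [hzero, smul_zero]

end AuxLemmas
section AuxLemmas2

variable {k : Type*} [Field k] {σ : Type*}

lemma homogeneousComponent_mem_annIdeal {f : MvPolynomial σ k} {m : ℕ}
    (hf : f ∈ homogeneousSubmodule σ k m) {s : MvPolynomial σ k}
    (hs : s ∈ annIdeal f) (i : ℕ) : homogeneousComponent i s ∈ annIdeal f := by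
  rw [mem_annIdeal_iff] at hs ⊢
  by_cases him : m < i
  · exact contract_eq_zero_of_gt (homogeneousComponent_mem i s) hf him
  by_cases hits : s.totalDegree < i
  · rw [homogeneousComponent_eq_zero _ _ hits, contract_zero_left]
  push_neg at him hits
  have hsum : ∑ j ∈ Finset.range (s.totalDegree + 1),
      contract (homogeneousComponent j s) f = contract s f := by
    calc ∑ j ∈ Finset.range (s.totalDegree + 1), contract (homogeneousComponent j s) f
        = contractL f (∑ j ∈ Finset.range (s.totalDegree + 1), homogeneousComponent j s) :=
          (map_sum (contractL f) _ _).symm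
      _ = contract s f := by rw [sum_homogeneousComponent]; rfl
  have h1 : ∀ j ∈ Finset.range (s.totalDegree + 1), j ≠ i →
      homogeneousComponent (m - i) (contract (homogeneousComponent j s) f) = 0 := by
    intro j _ hji
    rcases le_or_gt j m with hjm | hjm
    · rw [homogeneousComponent_of_mem
        (contract_mem_homogeneousSubmodule (homogeneousComponent_mem j s) hf),
        if_neg (by omega)]
    · rw [contract_eq_zero_of_gt (homogeneousComponent_mem j s) hf hjm, map_zero]
  have key : homogeneousComponent (m - i) (contract s f)
      = contract (homogeneousComponent i s) f := by
    rw [← hsum, map_sum,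
      Finset.sum_eq_single_of_mem i (Finset.mem_range.mpr (by omega)) h1,
      homogeneousComponent_of_mem
        (contract_mem_homogeneousSubmodule (homogeneousComponent_mem i s) hf),
      if_pos rfl]
  rw [← key, hs, map_zero]

lemma annIdeal_inf_zero {f : MvPolynomial σ k} (hf0 : f ≠ 0) :
    (annIdeal f).restrictScalars k ⊓ homogeneousSubmodule σ k 0 = ⊥ := by
  classical
  rw [eq_bot_iff]
  rintro x ⟨hx1, hx2⟩
  rw [Submodule.mem_bot]
  replace hx1 : contract x f = 0 := hx1
  have hx : x = C (MvPolynomial.coeff 0 x) := by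
    ext d
    rcases eq_or_ne d 0 with rfl | hd
    · simp
    · rw [MvPolynomial.coeff_C, if_neg (Ne.symm hd)]
      refine MvPolynomial.IsHomogeneous.coeff_eq_zero hx2 ?_
      rw [Ne, Finsupp.degree_eq_zero_iff]
      exact hd
  rw [hx, contract_C, smul_eq_zero] at hx1
  rcases hx1 with h | h
  · rw [hx, h, map_zero]
  · exact absurd h hf0

/-- The ideal of polynomials whose coefficients vanish below degree `d`. -/
def lowDeg (d : ℕ) : Ideal (MvPolynomial σ k) where
  carrier := {s | ∀ a : σ →₀ ℕ, a.degree < d → MvPolynomial.coeff a s = 0}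
  zero_mem' := fun a _ => MvPolynomial.coeff_zero a
  add_mem' := fun hs ht a ha => by
    rw [MvPolynomial.coeff_add, hs a ha, ht a ha, add_zero]
  smul_mem' := fun c s hs a ha => by
    classical
    rw [smul_eq_mul, MvPolynomial.coeff_mul]
    apply Finset.sum_eq_zero
    intro x hx
    rw [Finset.HasAntidiagonal.mem_antidiagonal] at hx
    have hdeg : x.1.degree + x.2.degree = a.degree := by
      rw [← Finsupp.degree_add', hx]
    rw [hs x.2 (by omega), mul_zero]

lemma mem_lowDeg {d : ℕ} {s : MvPolynomial σ k} :
    s ∈ (lowDeg d : Ideal (MvPolynomial σ k)) ↔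
      ∀ a : σ →₀ ℕ, a.degree < d → MvPolynomial.coeff a s = 0 := Iff.rfl

lemma mul_mem_lowDeg {d e : ℕ} {s t : MvPolynomial σ k}
    (hs : s ∈ (lowDeg d : Ideal (MvPolynomial σ k)))
    (ht : t ∈ (lowDeg e : Ideal (MvPolynomial σ k))) :
    s * t ∈ (lowDeg (d + e) : Ideal (MvPolynomial σ k)) := by
  classical
  rw [mem_lowDeg] at hs ht ⊢
  intro a ha
  rw [MvPolynomial.coeff_mul]
  apply Finset.sum_eq_zero
  intro x hx
  rw [Finset.HasAntidiagonal.mem_antidiagonal] at hx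
  have hdeg : x.1.degree + x.2.degree = a.degree := by
    rw [← Finsupp.degree_add', hx]
  rcases lt_or_ge x.1.degree d with h | h
  · rw [hs x.1 h, zero_mul]
  · rw [ht x.2 (by omega), mul_zero]

lemma sq_le_lowDeg {I : Ideal (MvPolynomial σ k)} {d : ℕ} (h : I ≤ lowDeg d) :
    I ^ 2 ≤ lowDeg (d + d) := by
  rw [pow_two]
  exact Ideal.mul_le.mpr fun s hs t ht => mul_mem_lowDeg (h hs) (h ht)

lemma inf_eq_bot_of_le_lowDeg {I : Ideal (MvPolynomial σ k)} {d j : ℕ}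
    (hI : I ≤ lowDeg d) (hj : j < d) :
    I.restrictScalars k ⊓ homogeneousSubmodule σ k j = ⊥ := by
  rw [eq_bot_iff]
  rintro x ⟨hx1, hx2⟩
  rw [Submodule.mem_bot]
  ext a
  rw [MvPolynomial.coeff_zero]
  rcases eq_or_ne a.degree j with hd | hd
  · exact hI hx1 a (by omega)
  · exact MvPolynomial.IsHomogeneous.coeff_eq_zero hx2 hd

lemma annIdeal_le_lowDeg {f : MvPolynomial σ k} {m : ℕ}
    (hf : f ∈ homogeneousSubmodule σ k m) {d : ℕ}
    (h : ∀ j < d, (annIdeal f).restrictScalars k ⊓ homogeneousSubmodule σ k j = ⊥) :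
    annIdeal f ≤ lowDeg d := by
  intro s hs
  rw [mem_lowDeg]
  intro a ha
  have hmem : homogeneousComponent a.degree s ∈
      (annIdeal f).restrictScalars k ⊓ homogeneousSubmodule σ k a.degree :=
    ⟨homogeneousComponent_mem_annIdeal hf hs _, homogeneousComponent_mem _ s⟩
  rw [h a.degree ha, Submodule.mem_bot] at hmem
  have hcoeff : MvPolynomial.coeff a s
      = MvPolynomial.coeff a (homogeneousComponent a.degree s) := by
    rw [coeff_homogeneousComponent, if_pos rfl]
  rw [hcoeff, hmem, MvPolynomial.coeff_zero]

lemma homogeneousSubmodule_le_of_le {I : Ideal (MvPolynomial σ k)}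
    (h5 : homogeneousSubmodule σ k 5 ≤ I.restrictScalars k) {j : ℕ} (hj : 5 ≤ j) :
    homogeneousSubmodule σ k j ≤ I.restrictScalars k := by
  intro x hx
  rw [Submodule.restrictScalars_mem]
  rw [show x = ∑ a ∈ x.support, MvPolynomial.monomial a (MvPolynomial.coeff a x) from
    MvPolynomial.as_sum x]
  apply Ideal.sum_mem
  intro a ha
  have hdeg : a.degree = j := by
    rw [Finsupp.degree_eq_weight_one]
    exact hx (MvPolynomial.mem_support_iff.mp ha)
  obtain ⟨b, hba, hbd⟩ := exists_le_degree_eq (a := a) (d := 5) (by omega)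
  have hmon : MvPolynomial.monomial a (MvPolynomial.coeff a x) =
      MvPolynomial.monomial b (MvPolynomial.coeff a x) * MvPolynomial.monomial (a - b) 1 := by
    rw [MvPolynomial.monomial_mul, mul_one, add_tsub_cancel_of_le hba]
  rw [hmon]
  refine Ideal.mul_mem_right _ _ ?_
  have hmem5 : (MvPolynomial.monomial b (MvPolynomial.coeff a x) : MvPolynomial σ k)
      ∈ homogeneousSubmodule σ k 5 := MvPolynomial.isHomogeneous_monomial _ hbd
  exact h5 hmem5

end AuxLemmas2
section AuxLemmas3

variable {k : Type*} [Field k] {σ : Type*} [Fintype σ] [DecidableEq σ]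

omit [Fintype σ] [DecidableEq σ] in
lemma Finsupp.degree_eq_sum_id (f : σ →₀ ℕ) : f.degree = f.sum fun _ n => n := rfl

/-- The set of exponent vectors of degree `i` is equivalent to `Sym σ i`. -/
noncomputable def degreeSetEquivSym (i : ℕ) :
    {d : σ →₀ ℕ | d.degree = i} ≃ Sym σ i where
  toFun d := ⟨Finsupp.toMultiset d.1, by
    rw [Finsupp.card_toMultiset]
    exact d.2⟩
  invFun s := ⟨Multiset.toFinsupp s.1, by
    have hs := s.2
    simp only [Set.mem_setOf_eq, Finsupp.degree_eq_sum_id]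
    rw [show ((Multiset.toFinsupp s.1).sum fun _ n => n)
        = (Multiset.toFinsupp s.1).sum fun _ => id from rfl, Multiset.toFinsupp_sum_eq]
    exact hs⟩
  left_inv d := Subtype.ext (Finsupp.toMultiset_toFinsupp d.1)
  right_inv s := Subtype.ext (Multiset.toFinsupp_toMultiset s.1)

noncomputable instance (i : ℕ) : Fintype {d : σ →₀ ℕ | d.degree = i} :=
  Fintype.ofEquiv (Sym σ i) (degreeSetEquivSym i).symm

lemma card_degreeSet (i : ℕ) :
    Fintype.card {d : σ →₀ ℕ | d.degree = i} = (Fintype.card σ + i - 1).choose i :=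
  (Fintype.card_congr (degreeSetEquivSym i)).trans (Sym.card_sym_eq_choose i)

/-- The degree-`i` homogeneous piece is linearly equivalent to a finite function space. -/
noncomputable def homogeneousSubmoduleEquiv (i : ℕ) :
    homogeneousSubmodule σ k i ≃ₗ[k] ({d : σ →₀ ℕ | d.degree = i} → k) :=
  (LinearEquiv.ofEq _ _ (homogeneousSubmodule_eq_finsupp_supported σ k i)).trans
    ((AddMonoidAlgebra.supportedEquivFinsupp _).trans (Finsupp.linearEquivFunOnFinite k k _))

instance (i : ℕ) : FiniteDimensional k (homogeneousSubmodule σ k i) :=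
  LinearEquiv.finiteDimensional (homogeneousSubmoduleEquiv (k := k) (σ := σ) i).symm

lemma finrank_homogeneousSubmodule (i : ℕ) :
    Module.finrank k ↥(homogeneousSubmodule σ k i) = (Fintype.card σ + i - 1).choose i := by
  rw [(homogeneousSubmoduleEquiv (k := k) (σ := σ) i).finrank_eq,
    Module.finrank_fintype_fun_eq_card, card_degreeSet]

set_option synthInstance.maxHeartbeats 1000000 in
set_option maxHeartbeats 1000000 in
lemma hilbQ_add_finrank (J : Ideal (MvPolynomial σ k)) (i : ℕ) :
    hilbQ J i + Module.finrank k ↥(J.restrictScalars k ⊓ homogeneousSubmodule σ k i) =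
      Module.finrank k ↥(homogeneousSubmodule σ k i) := by
  have heq : (J.restrictScalars k).comap (homogeneousSubmodule σ k i).subtype =
      (J.restrictScalars k ⊓ homogeneousSubmodule σ k i).comap
        (homogeneousSubmodule σ k i).subtype := by
    ext x
    simp only [Submodule.mem_comap, Submodule.mem_inf, Submodule.coe_subtype,
      Submodule.restrictScalars_mem]
    exact ⟨fun h => ⟨h, x.2⟩, fun h => h.1⟩
  have h := Submodule.finrank_quotient_add_finrank
    ((J.restrictScalars k ⊓ homogeneousSubmodule σ k i).comap
      (homogeneousSubmodule σ k i).subtype)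
  have e : Module.finrank k ↥((J.restrictScalars k ⊓ homogeneousSubmodule σ k i).comap
        (homogeneousSubmodule σ k i).subtype)
      = Module.finrank k ↥(J.restrictScalars k ⊓ homogeneousSubmodule σ k i) :=
    (Submodule.comapSubtypeEquivOfLe
      (inf_le_right : J.restrictScalars k ⊓ homogeneousSubmodule σ k i
        ≤ homogeneousSubmodule σ k i)).finrank_eq
  unfold hilbQ
  rw [heq, ← e]
  exact h

set_option synthInstance.maxHeartbeats 1000000 in
set_option maxHeartbeats 1000000 in
lemma hilbConormal_add_finrank (I : Ideal (MvPolynomial σ k)) (j : ℕ) :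
    hilbConormal I j +
      Module.finrank k ↥((I ^ 2).restrictScalars k ⊓ homogeneousSubmodule σ k j) =
      Module.finrank k ↥(I.restrictScalars k ⊓ homogeneousSubmodule σ k j) := by
  haveI : FiniteDimensional k ↥(I.restrictScalars k ⊓ homogeneousSubmodule σ k j) :=
    Submodule.finiteDimensional_of_le inf_le_right
  have hIle : (I ^ 2).restrictScalars k ≤ I.restrictScalars k := fun x hx =>
    Ideal.pow_le_self two_ne_zero hx
  have hle : (I ^ 2).restrictScalars k ⊓ homogeneousSubmodule σ k j ≤
      I.restrictScalars k ⊓ homogeneousSubmodule σ k j :=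
    le_inf (inf_le_left.trans hIle) inf_le_right
  have heq : ((I ^ 2).restrictScalars k).comap
        (I.restrictScalars k ⊓ homogeneousSubmodule σ k j).subtype =
      ((I ^ 2).restrictScalars k ⊓ homogeneousSubmodule σ k j).comap
        (I.restrictScalars k ⊓ homogeneousSubmodule σ k j).subtype := by
    ext x
    simp only [Submodule.mem_comap, Submodule.mem_inf, Submodule.coe_subtype]
    exact ⟨fun h => ⟨h, (Submodule.mem_inf.mp x.2).2⟩, fun h => h.1⟩
  have h := Submodule.finrank_quotient_add_finrank
    (((I ^ 2).restrictScalars k ⊓ homogeneousSubmodule σ k j).comap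
      (I.restrictScalars k ⊓ homogeneousSubmodule σ k j).subtype)
  have e : Module.finrank k ↥(((I ^ 2).restrictScalars k ⊓ homogeneousSubmodule σ k j).comap
        (I.restrictScalars k ⊓ homogeneousSubmodule σ k j).subtype)
      = Module.finrank k ↥((I ^ 2).restrictScalars k ⊓ homogeneousSubmodule σ k j) :=
    (Submodule.comapSubtypeEquivOfLe hle).finrank_eq
  unfold hilbConormal
  rw [heq, ← e]
  exact h

end AuxLemmas3
theorem small_tangent_space_iff_conormal_hilbert_function
    (K : Type*) [Field K] (n : ℕ) (hn : 0 < n)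
    (f : MvPolynomial (Fin n) K) (hf : f.IsHomogeneous 3) (hf0 : f ≠ 0) :
    SmallTangentSpace n f ↔
      (hilbConormal (annIdeal f) 2 = (n + 1).choose 2 - n ∧
       hilbConormal (annIdeal f) 3 = (n + 2).choose 3 - 1 ∧
       hilbConormal (annIdeal f) 4 = n ∧
       ∀ j : ℕ, j ≠ 2 → j ≠ 3 → j ≠ 4 → hilbConormal (annIdeal f) j = 0) := by
  classical
  have hfm : f ∈ homogeneousSubmodule (Fin n) K 3 := hf
  have hN : ∀ i : ℕ, Module.finrank K ↥(homogeneousSubmodule (Fin n) K i)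
      = (n + i - 1).choose i := by
    intro i
    rw [finrank_homogeneousSubmodule, Fintype.card_fin]
  have hN0 : Module.finrank K ↥(homogeneousSubmodule (Fin n) K 0) = 1 := by
    rw [hN 0]; simp
  have hN1 : Module.finrank K ↥(homogeneousSubmodule (Fin n) K 1) = n := by
    rw [hN 1]; simp
  have hN2 : Module.finrank K ↥(homogeneousSubmodule (Fin n) K 2) = (n + 1).choose 2 := by
    rw [hN 2]
    congr 1
  have hN3 : Module.finrank K ↥(homogeneousSubmodule (Fin n) K 3) = (n + 2).choose 3 := by
    rw [hN 3]
    congr 1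
  have hge2 : n ≤ (n + 1).choose 2 := by
    rw [Nat.choose_two_right]
    have h2 : n * 2 ≤ (n + 1) * (n + 1 - 1) := by
      simp only [Nat.add_sub_cancel]
      nlinarith
    calc n = n * 2 / 2 := by omega
      _ ≤ (n + 1) * (n + 1 - 1) / 2 := Nat.div_le_div_right h2
  have hge3 : 1 ≤ (n + 2).choose 3 := Nat.choose_pos (by omega)
  have h0bot : (annIdeal f).restrictScalars K ⊓ homogeneousSubmodule (Fin n) K 0 = ⊥ :=
    annIdeal_inf_zero hf0
  have hStop : ∀ i : ℕ, 3 < i →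
      homogeneousSubmodule (Fin n) K i ≤ (annIdeal f).restrictScalars K := by
    intro i hi x hx
    rw [Submodule.restrictScalars_mem, mem_annIdeal_iff]
    exact contract_eq_zero_of_gt hx hfm hi
  have hQ0 : hilbQ (annIdeal f) 0 = 1 := by
    have h := hilbQ_add_finrank (annIdeal f) 0
    rw [h0bot, finrank_bot, hN0] at h
    omega
  have hQtop : ∀ i : ℕ, 3 < i → hilbQ (annIdeal f) i = 0 := by
    intro i hi
    have h := hilbQ_add_finrank (annIdeal f) i
    rw [inf_eq_right.mpr (hStop i hi)] at h
    omega
  have mksq : (annIdeal f).restrictScalars K ⊓ homogeneousSubmodule (Fin n) K 1 = ⊥ →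
      ∀ j < 4, ((annIdeal f) ^ 2).restrictScalars K ⊓ homogeneousSubmodule (Fin n) K j = ⊥ := by
    intro h1bot j hj
    have hlow : annIdeal f ≤ lowDeg 2 := annIdeal_le_lowDeg hfm (by
      intro j' hj'
      interval_cases j'
      · exact h0bot
      · exact h1bot)
    have hlowsq : (annIdeal f) ^ 2 ≤ lowDeg 4 := by
      have h := sq_le_lowDeg hlow
      norm_num at h
      exact h
    exact inf_eq_bot_of_le_lowDeg hlowsq hj
  constructor
  · rintro ⟨hq0, hq1, hq2, hq3, hqtop, hp4, hp5⟩
    have h1bot : (annIdeal f).restrictScalars K ⊓ homogeneousSubmodule (Fin n) K 1 = ⊥ := by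
      haveI : FiniteDimensional K
          ↥((annIdeal f).restrictScalars K ⊓ homogeneousSubmodule (Fin n) K 1) :=
        Submodule.finiteDimensional_of_le inf_le_right
      have h := hilbQ_add_finrank (annIdeal f) 1
      rw [hq1, hN1] at h
      exact Submodule.finrank_eq_zero.mp (by omega)
    have hsq := mksq h1bot
    refine ⟨?_, ?_, ?_, ?_⟩
    · have hc := hilbConormal_add_finrank (annIdeal f) 2
      have hqe := hilbQ_add_finrank (annIdeal f) 2
      rw [hsq 2 (by omega), finrank_bot] at hc
      rw [hq2, hN2] at hqe
      omega
    · have hc := hilbConormal_add_finrank (annIdeal f) 3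
      have hqe := hilbQ_add_finrank (annIdeal f) 3
      rw [hsq 3 (by omega), finrank_bot] at hc
      rw [hq3, hN3] at hqe
      omega
    · have hc := hilbConormal_add_finrank (annIdeal f) 4
      have hqe2 := hilbQ_add_finrank ((annIdeal f) ^ 2) 4
      rw [inf_eq_right.mpr (hStop 4 (by omega))] at hc
      rw [hp4] at hqe2
      omega
    · intro j hj2 hj3 hj4
      rcases lt_or_ge j 2 with hj | hj
      · interval_cases j
        · have hc := hilbConormal_add_finrank (annIdeal f) 0
          rw [h0bot, finrank_bot] at hc
          omega
        · have hc := hilbConormal_add_finrank (annIdeal f) 1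
          rw [h1bot, finrank_bot] at hc
          omega
      · have hj5 : 5 ≤ j := by omega
        have h5le : homogeneousSubmodule (Fin n) K 5 ≤
            ((annIdeal f) ^ 2).restrictScalars K := by
          have h := hilbQ_add_finrank ((annIdeal f) ^ 2) 5
          rw [hp5, zero_add] at h
          have heqS : ((annIdeal f) ^ 2).restrictScalars K ⊓ homogeneousSubmodule (Fin n) K 5
              = homogeneousSubmodule (Fin n) K 5 :=
            Submodule.eq_of_le_of_finrank_eq inf_le_right h
          intro x hx
          have hx' : x ∈ ((annIdeal f) ^ 2).restrictScalars K ⊓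
              homogeneousSubmodule (Fin n) K 5 := by rw [heqS]; exact hx
          exact (Submodule.mem_inf.mp hx').1
        have hjle := homogeneousSubmodule_le_of_le h5le hj5
        have hc := hilbConormal_add_finrank (annIdeal f) j
        rw [inf_eq_right.mpr hjle, inf_eq_right.mpr (hStop j (by omega))] at hc
        omega
  · rintro ⟨hc2, hc3, hc4, hcrest⟩
    have hlow1 : annIdeal f ≤ lowDeg 1 := annIdeal_le_lowDeg hfm (by
      intro j hj
      interval_cases j
      exact h0bot)
    have hlowsq1 : (annIdeal f) ^ 2 ≤ lowDeg 2 := by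
      have h := sq_le_lowDeg hlow1
      norm_num at h
      exact h
    have hsqbot1 : ((annIdeal f) ^ 2).restrictScalars K ⊓
        homogeneousSubmodule (Fin n) K 1 = ⊥ :=
      inf_eq_bot_of_le_lowDeg hlowsq1 (by omega)
    have h1bot : (annIdeal f).restrictScalars K ⊓ homogeneousSubmodule (Fin n) K 1 = ⊥ := by
      haveI : FiniteDimensional K
          ↥((annIdeal f).restrictScalars K ⊓ homogeneousSubmodule (Fin n) K 1) :=
        Submodule.finiteDimensional_of_le inf_le_right
      have hc := hilbConormal_add_finrank (annIdeal f) 1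
      rw [hsqbot1, finrank_bot, hcrest 1 (by omega) (by omega) (by omega)] at hc
      exact Submodule.finrank_eq_zero.mp (by omega)
    have hsq := mksq h1bot
    refine ⟨hQ0, ?_, ?_, ?_, hQtop, ?_, ?_⟩
    · have hqe := hilbQ_add_finrank (annIdeal f) 1
      rw [h1bot, finrank_bot, hN1] at hqe
      omega
    · have hqe := hilbQ_add_finrank (annIdeal f) 2
      have hc := hilbConormal_add_finrank (annIdeal f) 2
      rw [hsq 2 (by omega), finrank_bot, hc2] at hc
      rw [hN2] at hqe
      omega
    · have hqe := hilbQ_add_finrank (annIdeal f) 3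
      have hc := hilbConormal_add_finrank (annIdeal f) 3
      rw [hsq 3 (by omega), finrank_bot, hc3] at hc
      rw [hN3] at hqe
      omega
    · have hqe2 := hilbQ_add_finrank ((annIdeal f) ^ 2) 4
      have hc := hilbConormal_add_finrank (annIdeal f) 4
      rw [hc4, inf_eq_right.mpr (hStop 4 (by omega))] at hc
      omega
    · have hqe2 := hilbQ_add_finrank ((annIdeal f) ^ 2) 5
      have hc := hilbConormal_add_finrank (annIdeal f) 5
      rw [hcrest 5 (by omega) (by omega) (by omega), zero_add,
        inf_eq_right.mpr (hStop 5 (by omega))] at hc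
      omega
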